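/- (Strong robustness.) Let A be an m×n real matrix, let 1 ≤ k ≤ n, and let C > 1. Suppose that for every subset K ⊆ {1,…,n} with |K| = k, every x' ∈ ℝⁿ, and every w ∈ ℝⁿ with Aw = 0, one has ‖x'_K + w_K‖₁ + (1/C)·‖w_K̄‖₁ ≥ ‖x'_K‖₁. Then for every subset K with |K| = k and every x ∈ ℝⁿ, every ℓ1 minimizer x̂ for (A, x) satisfies ‖x − x̂‖₁ ≤ (2(C+1)/(C−1))·‖x_K̄‖₁. -/
import Mathlib


/-- The ℓ1 norm of a vector in ℝⁿ. -/
noncomputable def l1 {n : ℕ} (x : Fin n → ℝ) : ℝ := ∑ i, |x i|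

/-- The restriction of a vector to the coordinates in `K` (zero outside `K`). -/
def restr {n : ℕ} (K : Finset (Fin n)) (x : Fin n → ℝ) : Fin n → ℝ :=
  fun i => if i ∈ K then x i else 0

lemma l1_nonneg {n : ℕ} (x : Fin n → ℝ) : 0 ≤ l1 x :=
  Finset.sum_nonneg fun _ _ => abs_nonneg _

lemma l1_add_le {n : ℕ} (x y : Fin n → ℝ) : l1 (x + y) ≤ l1 x + l1 y := by
  unfold l1
  rw [← Finset.sum_add_distrib]
  exact Finset.sum_le_sum fun i _ => abs_add_le _ _

lemma l1_neg {n : ℕ} (x : Fin n → ℝ) : l1 (-x) = l1 x := by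
  unfold l1; simp

lemma l1_sub_le {n : ℕ} (x y : Fin n → ℝ) : l1 x - l1 y ≤ l1 (x + y) := by
  have h := l1_add_le (x + y) (-y)
  simp only [add_neg_cancel_right] at h
  rw [l1_neg] at h
  linarith

lemma restr_add {n : ℕ} (K : Finset (Fin n)) (x y : Fin n → ℝ) :
    restr K (x + y) = restr K x + restr K y := by
  funext i; simp only [restr, Pi.add_apply]; split <;> simp

lemma restr_neg {n : ℕ} (K : Finset (Fin n)) (x : Fin n → ℝ) :
    restr K (-x) = -(restr K x) := by
  funext i; simp only [restr, Pi.neg_apply]; split <;> simp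

lemma l1_split {n : ℕ} (K : Finset (Fin n)) (x : Fin n → ℝ) :
    l1 x = l1 (restr K x) + l1 (restr Kᶜ x) := by
  unfold l1
  rw [← Finset.sum_add_distrib]
  refine Finset.sum_congr rfl fun i _ => ?_
  by_cases h : i ∈ K <;> simp [restr, h]

theorem stmt_6 {m n : ℕ} (A : Matrix (Fin m) (Fin n) ℝ)
    (k : ℕ) (hk1 : 1 ≤ k) (hkn : k ≤ n) (C : ℝ) (hC : 1 < C)
    (hcond : ∀ K : Finset (Fin n), K.card = k →
      ∀ x' : Fin n → ℝ, ∀ w : Fin n → ℝ, A.mulVec w = 0 →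
        l1 (restr K x' + restr K w) + (1 / C) * l1 (restr Kᶜ w) ≥ l1 (restr K x')) :
    ∀ K : Finset (Fin n), K.card = k →
      ∀ x : Fin n → ℝ, ∀ xh : Fin n → ℝ, A.mulVec xh = A.mulVec x →
        (∀ z : Fin n → ℝ, A.mulVec z = A.mulVec x → l1 xh ≤ l1 z) →
        l1 (x - xh) ≤ (2 * (C + 1) / (C - 1)) * l1 (restr Kᶜ x) := by
  intro K hK x xh hA hmin
  have hC0 : (0 : ℝ) < C := by linarith
  set w : Fin n → ℝ := xh - x with hwdef
  have hw : A.mulVec w = 0 := by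
    rw [hwdef, Matrix.mulVec_sub, hA, sub_self]
  -- NSP: a ≤ (1/C) b
  have hNSP : l1 (restr K w) ≤ (1 / C) * l1 (restr Kᶜ w) := by
    have h := hcond K hK (-w) w hw
    rw [restr_neg] at h
    simp only [neg_add_cancel] at h
    have h0 : l1 (0 : Fin n → ℝ) = 0 := by unfold l1; simp
    rw [h0, l1_neg] at h
    linarith
  set a := l1 (restr K w) with ha
  set b := l1 (restr Kᶜ w) with hb
  set t := l1 (restr Kᶜ x) with ht
  have hb0 : 0 ≤ b := l1_nonneg _
  have ht0 : 0 ≤ t := l1_nonneg _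
  have ha0 : 0 ≤ a := l1_nonneg _
  -- minimality
  have hle : l1 xh ≤ l1 x := hmin x rfl
  -- cone constraint: b ≤ a + 2t
  have hxh : xh = x + w := by rw [hwdef]; ring
  have hcone : b ≤ a + 2 * t := by
    have h1 : l1 (restr K x) - a ≤ l1 (restr K (x + w)) := by
      rw [restr_add]; exact l1_sub_le _ _
    have h2 : b - t ≤ l1 (restr Kᶜ (x + w)) := by
      rw [restr_add, add_comm]; exact l1_sub_le _ _
    have h3 : l1 (x + w) = l1 (restr K (x + w)) + l1 (restr Kᶜ (x + w)) :=
      l1_split K _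
    have h4 : l1 x = l1 (restr K x) + t := l1_split K x
    rw [hxh, h3] at hle
    linarith
  -- total
  have htot : l1 (x - xh) = a + b := by
    have : x - xh = -w := by rw [hwdef]; ring
    rw [this, l1_neg, l1_split K w]
  rw [htot]
  have hCa : C * a ≤ b := by
    rw [one_div] at hNSP
    calc C * a ≤ C * (C⁻¹ * b) := by nlinarith
      _ = b := by field_simp
  rw [div_mul_eq_mul_div, le_div_iff₀ (by linarith : (0:ℝ) < C - 1)]
  nlinarith [mul_nonneg ht0 hC0.le]
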